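/- Let Ω ⊂ ℝⁿ be Lebesgue measurable with finite measure and (u_k) ⊂ L²(Ω) a sequence with Σ_{k=1}^∞ ‖u_{k+1} − u_k‖²_{L²(Ω)} < ∞ (as holds for proximal gradient iterates with L > L_f). Let b > a and define A_k⁺ := {x ∈ Ω : u_k(x) ≥ b}, A_k⁻ := {x ∈ Ω : u_k(x) ≤ a} with characteristic functions χ_k⁺, χ_k⁻. Then Σ_{k=1}^∞ ‖χ_{k+1}⁺·χ_k⁻ + χ_{k+1}⁻·χ_k⁺‖_{L¹(Ω)} < ∞. If in addition χ_k⁺ + χ_k⁻ = 1 almost everywhere for all k, then there are characteristic functions χ⁺, χ⁻ with χ⁺ + χ⁻ = 1 almost everywhere such that χ_k⁺ → χ⁺ and χ_k⁻ → χ⁻ strongly in L¹(Ω) and pointwise almost everywhere. -/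

import Mathlib

open MeasureTheory Filter
open scoped NNReal ENNReal

set_option maxHeartbeats 1000000 in
/-- let `(u_k) ⊂ L²(Ω)` with `Σ ‖u_{k+1} − u_k‖² < ∞`, `b > a`, and let
`χ_k⁺, χ_k⁻` be the characteristic functions of `A_k⁺ = {u_k ≥ b}`, `A_k⁻ = {u_k ≤ a}`. Then
`Σ_k ‖χ_{k+1}⁺χ_k⁻ + χ_{k+1}⁻χ_k⁺‖_{L¹} < ∞`; moreover, if `χ_k⁺ + χ_k⁻ = 1` a.e. for all `k`,
then there are characteristic functions `χ⁺, χ⁻` with `χ⁺ + χ⁻ = 1` a.e. such that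
`χ_k⁺ → χ⁺` and `χ_k⁻ → χ⁻` in `L¹(Ω)` and pointwise almost everywhere. -/
theorem chi_plus_minus_converge (n : ℕ) (Ω : Set (EuclideanSpace ℝ (Fin n)))
    (hΩ : MeasurableSet Ω) (hfin : volume Ω < ⊤)
    (u : ℕ → Lp ℝ 2 (volume.restrict Ω))
    (hsum : Summable fun k : ℕ => ‖u (k + 1) - u k‖ ^ 2)
    (a b : ℝ) (hab : a < b)
    -- the characteristic functions of `A_k⁺` and `A_k⁻`:
    (chiP chiM : ℕ → EuclideanSpace ℝ (Fin n) → ℝ)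
    (hchiP : ∀ k, chiP k =
      Set.indicator {x | b ≤ (u k : EuclideanSpace ℝ (Fin n) → ℝ) x} (fun _ => (1 : ℝ)))
    (hchiM : ∀ k, chiM k =
      Set.indicator {x | (u k : EuclideanSpace ℝ (Fin n) → ℝ) x ≤ a} (fun _ => (1 : ℝ))) :
    (∑' k : ℕ, ∫⁻ x, ENNReal.ofReal
        (chiP (k + 1) x * chiM k x + chiM (k + 1) x * chiP k x) ∂(volume.restrict Ω)) < ⊤
    ∧ ((∀ k : ℕ, ∀ᵐ x ∂(volume.restrict Ω), chiP k x + chiM k x = 1) →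
        ∃ A B : Set (EuclideanSpace ℝ (Fin n)), MeasurableSet A ∧ MeasurableSet B ∧
          (∀ᵐ x ∂(volume.restrict Ω),
            A.indicator (fun _ => (1 : ℝ)) x + B.indicator (fun _ => (1 : ℝ)) x = 1) ∧
          Tendsto (fun k : ℕ => ∫⁻ x, ENNReal.ofReal
              |chiP k x - A.indicator (fun _ => (1 : ℝ)) x| ∂(volume.restrict Ω)) atTop (nhds 0) ∧
          Tendsto (fun k : ℕ => ∫⁻ x, ENNReal.ofReal
              |chiM k x - B.indicator (fun _ => (1 : ℝ)) x| ∂(volume.restrict Ω)) atTop (nhds 0) ∧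
          (∀ᵐ x ∂(volume.restrict Ω),
            Tendsto (fun k : ℕ => chiP k x) atTop (nhds (A.indicator (fun _ => (1 : ℝ)) x)) ∧
            Tendsto (fun k : ℕ => chiM k x) atTop (nhds (B.indicator (fun _ => (1 : ℝ)) x)))) := by
  have hUmeas : ∀ k, Measurable ((u k : EuclideanSpace ℝ (Fin n) → ℝ)) :=
    fun k => (Lp.stronglyMeasurable (u k)).measurable
  have hSPm : ∀ k, MeasurableSet {x | b ≤ (u k : EuclideanSpace ℝ (Fin n) → ℝ) x} :=
    fun k => measurableSet_le measurable_const (hUmeas k)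
  have hSMm : ∀ k, MeasurableSet {x | (u k : EuclideanSpace ℝ (Fin n) → ℝ) x ≤ a} :=
    fun k => measurableSet_le (hUmeas k) measurable_const
  have hPmeas : ∀ k, Measurable (chiP k) := by
    intro k; rw [hchiP k]; exact measurable_const.indicator (hSPm k)
  have hMmeas : ∀ k, Measurable (chiM k) := by
    intro k; rw [hchiM k]; exact measurable_const.indicator (hSMm k)
  have hP01 : ∀ k x, chiP k x = 0 ∨ chiP k x = 1 := by
    intro k x; rw [hchiP k]
    by_cases h : x ∈ {x | b ≤ (u k : EuclideanSpace ℝ (Fin n) → ℝ) x}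
    · right; simp [Set.indicator_of_mem h]
    · left; simp [Set.indicator_of_notMem h]
  have hM01 : ∀ k x, chiM k x = 0 ∨ chiM k x = 1 := by
    intro k x; rw [hchiM k]
    by_cases h : x ∈ {x | (u k : EuclideanSpace ℝ (Fin n) → ℝ) x ≤ a}
    · right; simp [Set.indicator_of_mem h]
    · left; simp [Set.indicator_of_notMem h]
  have hba : (0:ℝ) < b - a := by linarith
  have hε0 : ENNReal.ofReal (b - a) ≠ 0 := by
    simp only [ne_eq, ENNReal.ofReal_eq_zero, not_le]; linarith
  -- Chebyshev-type bound
  have hcheb : ∀ (k : ℕ) (s : Set (EuclideanSpace ℝ (Fin n))),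
      (∀ x ∈ s, b - a ≤ |(u (k+1) : EuclideanSpace ℝ (Fin n) → ℝ) x
          - (u k : EuclideanSpace ℝ (Fin n) → ℝ) x|) →
      (volume.restrict Ω) s
        ≤ (ENNReal.ofReal (b - a))⁻¹ ^ 2 * ENNReal.ofReal (‖u (k + 1) - u k‖ ^ 2) := by
    intro k s hs_sub
    set F : EuclideanSpace ℝ (Fin n) → ℝ := fun x =>
      (u (k+1) : EuclideanSpace ℝ (Fin n) → ℝ) x - (u k : EuclideanSpace ℝ (Fin n) → ℝ) x
      with hF
    set G : EuclideanSpace ℝ (Fin n) → ℝ :=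
      ((u (k+1) - u k : Lp ℝ 2 (volume.restrict Ω)) : EuclideanSpace ℝ (Fin n) → ℝ) with hG
    have hd : G =ᵐ[volume.restrict Ω] F := by
      filter_upwards [Lp.coeFn_sub (u (k+1)) (u k)] with x hx
      simpa [hF, hG] using hx
    set ε := ENNReal.ofReal (b - a) with hεdef
    have step1 : s ⊆ {x | ε ≤ (‖F x‖₊ : ℝ≥0∞)} := by
      intro x hx
      have h1 := hs_sub x hx
      simp only [Set.mem_setOf_eq]
      rw [← enorm_eq_nnnorm, ← ofReal_norm]
      exact ENNReal.ofReal_le_ofReal (by rw [Real.norm_eq_abs]; exact h1)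
    have step2 : (volume.restrict Ω) {x | ε ≤ (‖F x‖₊ : ℝ≥0∞)}
        = (volume.restrict Ω) {x | ε ≤ (‖G x‖₊ : ℝ≥0∞)} := by
      apply measure_congr
      filter_upwards [hd] with x hx
      show (ε ≤ ((‖F x‖₊ : ℝ≥0∞))) = (ε ≤ ((‖G x‖₊ : ℝ≥0∞)))
      rw [hx]
    have hGm : AEStronglyMeasurable G (volume.restrict Ω) := by
      rw [hG]; exact Lp.aestronglyMeasurable _
    have step3 := meas_ge_le_mul_pow_eLpNorm_enorm (volume.restrict Ω) (p := 2) (f := G)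
      two_ne_zero ENNReal.ofNat_ne_top hGm hε0 (by simp)
    have h2 : ((2 : ℝ≥0∞)).toReal = (2 : ℝ) := by simp
    have hnorm : eLpNorm G 2 (volume.restrict Ω) ^ (2:ℝ)
        = ENNReal.ofReal (‖u (k + 1) - u k‖ ^ 2) := by
      rw [hG, Lp.norm_def, ← ENNReal.toReal_pow,
        ENNReal.ofReal_toReal (ENNReal.pow_ne_top (Lp.eLpNorm_ne_top _)),
        ← ENNReal.rpow_natCast]
      norm_num
    calc (volume.restrict Ω) s ≤ (volume.restrict Ω) {x | ε ≤ (‖F x‖₊ : ℝ≥0∞)} :=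
          measure_mono step1
      _ = (volume.restrict Ω) {x | ε ≤ (‖G x‖₊ : ℝ≥0∞)} := step2
      _ ≤ ε⁻¹ ^ ((2:ℝ≥0∞)).toReal * eLpNorm G 2 (volume.restrict Ω) ^ ((2:ℝ≥0∞)).toReal := step3
      _ = ε⁻¹ ^ 2 * ENNReal.ofReal (‖u (k + 1) - u k‖ ^ 2) := by
          rw [h2, hnorm, ← ENNReal.rpow_natCast ε⁻¹]; norm_num
  -- per-k bound on the integral
  have key : ∀ k : ℕ, (∫⁻ x, ENNReal.ofReal
      (chiP (k + 1) x * chiM k x + chiM (k + 1) x * chiP k x) ∂(volume.restrict Ω))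
      ≤ 2 * ((ENNReal.ofReal (b - a))⁻¹ ^ 2 * ENNReal.ofReal (‖u (k + 1) - u k‖ ^ 2)) := by
    intro k
    set S1 : Set (EuclideanSpace ℝ (Fin n)) :=
      {x | b ≤ (u (k+1) : EuclideanSpace ℝ (Fin n) → ℝ) x}
        ∩ {x | (u k : EuclideanSpace ℝ (Fin n) → ℝ) x ≤ a} with hS1def
    set S2 : Set (EuclideanSpace ℝ (Fin n)) :=
      {x | (u (k+1) : EuclideanSpace ℝ (Fin n) → ℝ) x ≤ a}
        ∩ {x | b ≤ (u k : EuclideanSpace ℝ (Fin n) → ℝ) x} with hS2def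
    have hS1m : MeasurableSet S1 := (hSPm (k+1)).inter (hSMm k)
    have hS2m : MeasurableSet S2 := (hSMm (k+1)).inter (hSPm k)
    have hprod : ∀ x, ENNReal.ofReal
        (chiP (k + 1) x * chiM k x + chiM (k + 1) x * chiP k x)
        = S1.indicator (1 : EuclideanSpace ℝ (Fin n) → ℝ≥0∞) x + S2.indicator (1 : EuclideanSpace ℝ (Fin n) → ℝ≥0∞) x := by
      intro x
      rw [hchiP (k+1), hchiM k, hchiM (k+1), hchiP k]
      by_cases h1 : b ≤ (u (k+1) : EuclideanSpace ℝ (Fin n) → ℝ) x <;>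
        by_cases h2 : (u k : EuclideanSpace ℝ (Fin n) → ℝ) x ≤ a <;>
          by_cases h3 : (u (k+1) : EuclideanSpace ℝ (Fin n) → ℝ) x ≤ a <;>
            by_cases h4 : b ≤ (u k : EuclideanSpace ℝ (Fin n) → ℝ) x <;>
              simp [hS1def, hS2def, Set.indicator_apply, Set.mem_setOf_eq, Set.mem_inter_iff,
                Pi.one_apply, h1, h2, h3, h4] <;> first
                | linarith
                | norm_num
    have hint : (∫⁻ x, ENNReal.ofReal
        (chiP (k + 1) x * chiM k x + chiM (k + 1) x * chiP k x) ∂(volume.restrict Ω))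
        = (volume.restrict Ω) S1 + (volume.restrict Ω) S2 := by
      simp_rw [hprod]
      rw [lintegral_add_left (measurable_one.indicator hS1m),
        lintegral_indicator_one hS1m, lintegral_indicator_one hS2m]
    have hb1 : (volume.restrict Ω) S1 ≤ (ENNReal.ofReal (b - a))⁻¹ ^ 2
        * ENNReal.ofReal (‖u (k + 1) - u k‖ ^ 2) := by
      apply hcheb k
      rintro x ⟨hx1, hx2⟩
      simp only [Set.mem_setOf_eq] at hx1 hx2
      exact le_trans (by linarith) (le_abs_self _)
    have hb2 : (volume.restrict Ω) S2 ≤ (ENNReal.ofReal (b - a))⁻¹ ^ 2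
        * ENNReal.ofReal (‖u (k + 1) - u k‖ ^ 2) := by
      apply hcheb k
      rintro x ⟨hx1, hx2⟩
      simp only [Set.mem_setOf_eq] at hx1 hx2
      exact le_trans (by linarith) (neg_le_abs _)
    rw [hint, two_mul]
    exact add_le_add hb1 hb2
  have hCne : (2 : ℝ≥0∞) * (ENNReal.ofReal (b - a))⁻¹ ^ 2 ≠ ⊤ := by
    apply ENNReal.mul_ne_top (by simp)
    exact ENNReal.pow_ne_top (ENNReal.inv_ne_top.2 hε0)
  have part1 : (∑' k : ℕ, ∫⁻ x, ENNReal.ofReal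
      (chiP (k + 1) x * chiM k x + chiM (k + 1) x * chiP k x) ∂(volume.restrict Ω)) < ⊤ := by
    have h1 : (∑' k : ℕ, ∫⁻ x, ENNReal.ofReal
        (chiP (k + 1) x * chiM k x + chiM (k + 1) x * chiP k x) ∂(volume.restrict Ω))
        ≤ ∑' k : ℕ, 2 * ((ENNReal.ofReal (b - a))⁻¹ ^ 2
            * ENNReal.ofReal (‖u (k + 1) - u k‖ ^ 2)) := ENNReal.tsum_le_tsum key
    have h2 : (∑' k : ℕ, 2 * ((ENNReal.ofReal (b - a))⁻¹ ^ 2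
        * ENNReal.ofReal (‖u (k + 1) - u k‖ ^ 2)))
        = (2 * (ENNReal.ofReal (b - a))⁻¹ ^ 2)
          * ENNReal.ofReal (∑' k : ℕ, ‖u (k + 1) - u k‖ ^ 2) := by
      rw [ENNReal.ofReal_tsum_of_nonneg (fun k => sq_nonneg _) hsum, ← ENNReal.tsum_mul_left]
      congr 1; ext k; ring
    refine lt_of_le_of_lt (h1.trans h2.le) ?_
    exact ENNReal.mul_lt_top hCne.lt_top ENNReal.ofReal_lt_top
  refine ⟨part1, fun hae => ?_⟩
  -- Part 2
  set A : Set (EuclideanSpace ℝ (Fin n)) :=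
    {x | Tendsto (fun k => chiP k x) atTop (nhds (1:ℝ))} with hAdef
  set B : Set (EuclideanSpace ℝ (Fin n)) :=
    {x | Tendsto (fun k => chiM k x) atTop (nhds (1:ℝ))} with hBdef
  have hA : MeasurableSet A := by rw [hAdef]; exact measurableSet_tendsto _ hPmeas
  have hB : MeasurableSet B := by rw [hBdef]; exact measurableSet_tendsto _ hMmeas
  -- a.e. the series converges pointwise
  have hmeasg : ∀ k, Measurable fun x => ENNReal.ofReal
      (chiP (k + 1) x * chiM k x + chiM (k + 1) x * chiP k x) := by
    intro k
    exact ENNReal.measurable_ofReal.comp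
      (((hPmeas (k+1)).mul (hMmeas k)).add ((hMmeas (k+1)).mul (hPmeas k)))
  have hsum2 : ∀ᵐ x ∂(volume.restrict Ω), (∑' k : ℕ, ENNReal.ofReal
      (chiP (k + 1) x * chiM k x + chiM (k + 1) x * chiP k x)) < ⊤ := by
    have hT := lintegral_tsum (μ := volume.restrict Ω) (fun k => (hmeasg k).aemeasurable)
    refine ae_lt_top (Measurable.ennreal_tsum hmeasg) ?_
    rw [hT]; exact part1.ne
  have hev : ∀ᵐ x ∂(volume.restrict Ω), ∃ N : ℕ, ∀ k, N ≤ k →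
      chiP (k+1) x * chiM k x = 0 ∧ chiM (k+1) x * chiP k x = 0 := by
    filter_upwards [hsum2] with x hx
    have htend := ENNReal.tendsto_atTop_zero_of_tsum_ne_top hx.ne
    have hev1 : ∀ᶠ k in atTop, ENNReal.ofReal
        (chiP (k + 1) x * chiM k x + chiM (k + 1) x * chiP k x) < 1 :=
      htend.eventually_lt_const zero_lt_one
    obtain ⟨N, hN⟩ := eventually_atTop.1 hev1
    refine ⟨N, fun k hk => ?_⟩
    have hlt := hN k hk
    have hprod01 : ∀ (r s : ℝ), (r = 0 ∨ r = 1) → (s = 0 ∨ s = 1) →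
        (r * s = 0 ∨ r * s = 1) := by
      rintro r s (h | h) (h' | h') <;> simp [h, h']
    rcases hprod01 _ _ (hP01 (k+1) x) (hM01 k x) with h1 | h1 <;>
      rcases hprod01 _ _ (hM01 (k+1) x) (hP01 k x) with h2 | h2
    · exact ⟨h1, h2⟩
    all_goals
      exfalso
      rw [h1, h2] at hlt
      norm_num at hlt
  have hall : ∀ᵐ x ∂(volume.restrict Ω), ∀ k, chiP k x + chiM k x = 1 := ae_all_iff.2 hae
  have hgood : ∀ᵐ x ∂(volume.restrict Ω),
      Tendsto (fun k => chiP k x) atTop (nhds (A.indicator (fun _ => (1:ℝ)) x))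
      ∧ Tendsto (fun k => chiM k x) atTop (nhds (B.indicator (fun _ => (1:ℝ)) x))
      ∧ A.indicator (fun _ => (1:ℝ)) x + B.indicator (fun _ => (1:ℝ)) x = 1 := by
    filter_upwards [hev, hall] with x hx hallx
    obtain ⟨N, hN⟩ := hx
    have hconst : ∀ k, N ≤ k → chiP k x = chiP N x := by
      intro k hk
      induction k, hk using Nat.le_induction with
      | base => rfl
      | succ k hk ih =>
        have h1 := (hN k hk).1
        have h2 := (hN k hk).2
        rcases hP01 k x with h | h
        · have hm : chiM k x = 1 := by have := hallx k; linarith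
          have hz : chiP (k+1) x = 0 := by rw [hm, mul_one] at h1; exact h1
          rw [hz, ← h]; exact ih
        · have hq : chiM (k+1) x = 0 := by rw [h, mul_one] at h2; exact h2
          have hz : chiP (k+1) x = 1 := by have := hallx (k+1); linarith
          rw [hz, ← h]; exact ih
    have hconstM : ∀ k, N ≤ k → chiM k x = 1 - chiP N x := by
      intro k hk; have := hallx k; rw [hconst k hk] at this; linarith
    have htP : Tendsto (fun k => chiP k x) atTop (nhds (chiP N x)) :=
      tendsto_atTop_of_eventually_const hconst
    have htM : Tendsto (fun k => chiM k x) atTop (nhds (1 - chiP N x)) :=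
      tendsto_atTop_of_eventually_const hconstM
    rcases hP01 N x with h | h
    · rw [h] at htP htM
      norm_num at htM
      have hxB : x ∈ B := htM
      have hxA : x ∉ A := fun hxa => by
        have h10 := tendsto_nhds_unique htP hxa; norm_num at h10
      simp only [Set.indicator_of_mem hxB, Set.indicator_of_notMem hxA]
      exact ⟨htP, htM, by norm_num⟩
    · rw [h] at htP htM
      norm_num at htM
      have hxA : x ∈ A := htP
      have hxB : x ∉ B := fun hxb => by
        have h10 := tendsto_nhds_unique htM hxb; norm_num at h10
      simp only [Set.indicator_of_mem hxA, Set.indicator_of_notMem hxB]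
      exact ⟨htP, htM, by norm_num⟩
  -- dominated convergence helper
  have hdom : ∀ (f : ℕ → EuclideanSpace ℝ (Fin n) → ℝ) (S : Set (EuclideanSpace ℝ (Fin n))),
      MeasurableSet S → (∀ k, Measurable (f k)) → (∀ k x, f k x = 0 ∨ f k x = 1) →
      (∀ᵐ x ∂(volume.restrict Ω),
        Tendsto (fun k => f k x) atTop (nhds (S.indicator (fun _ => (1:ℝ)) x))) →
      Tendsto (fun k => ∫⁻ x, ENNReal.ofReal
        |f k x - S.indicator (fun _ => (1:ℝ)) x| ∂(volume.restrict Ω)) atTop (nhds 0) := by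
    intro f S hS hfm hf01 hlim
    have hind01 : ∀ x : EuclideanSpace ℝ (Fin n),
        S.indicator (fun _ => (1:ℝ)) x = 0 ∨ S.indicator (fun _ => (1:ℝ)) x = 1 := by
      intro x; by_cases h : x ∈ S
      · right; simp [Set.indicator_of_mem h]
      · left; simp [Set.indicator_of_notMem h]
    have h0 : Tendsto (fun k => ∫⁻ x, ENNReal.ofReal
        |f k x - S.indicator (fun _ => (1:ℝ)) x| ∂(volume.restrict Ω)) atTop
        (nhds (∫⁻ _, (0:ℝ≥0∞) ∂(volume.restrict Ω))) := by
      apply tendsto_lintegral_of_dominated_convergence (fun _ => (1:ℝ≥0∞))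
      · intro k
        exact ENNReal.measurable_ofReal.comp
          (((hfm k).sub (measurable_const.indicator hS)).abs)
      · intro k
        refine Eventually.of_forall fun x => ?_
        rw [ENNReal.ofReal_le_one]
        rcases hf01 k x with h | h <;> rcases hind01 x with h' | h' <;>
          rw [h, h'] <;> norm_num
      · rw [lintegral_one, Measure.restrict_apply_univ]
        exact hfin.ne
      · filter_upwards [hlim] with x hx
        have habs : Tendsto (fun k => |f k x - S.indicator (fun _ => (1:ℝ)) x|)
            atTop (nhds 0) := by
          have h1 := (hx.sub_const (S.indicator (fun _ => (1:ℝ)) x)).abs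
          rw [sub_self, abs_zero] at h1
          exact h1
        have h2 := ENNReal.tendsto_ofReal habs
        simpa using h2
    simpa using h0
  exact ⟨A, B, hA, hB, hgood.mono fun x h => h.2.2,
    hdom chiP A hA hPmeas hP01 (hgood.mono fun x h => h.1),
    hdom chiM B hB hMmeas hM01 (hgood.mono fun x h => h.2.1),
    hgood.mono fun x h => ⟨h.1, h.2.1⟩⟩
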